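/- Let Φ ∈ ℝ^{d×K}, I ⊆ {1,...,K} with Φ_I of full column rank, and y = ∑_{i∈I} φ_i x_i with x_i ≠ 0 for i ∈ I. If ‖Φ_{I^c}*Φ_I(Φ_I*Φ_I)^{-1} sign(x_I)‖_∞ < 1, then x (extended by zero off I) is the unique solution of min ‖z‖₁ subject to Φz = y. -/
import Mathlib


open Matrix
open scoped BigOperators

private lemma mul_sign_eq_abs (a : ℝ) : a * Real.sign a = |a| := by
  rcases lt_trichotomy a 0 with h | h | h
  · rw [Real.sign_of_neg h, abs_of_neg h]; ring
  · simp [h]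
  · rw [Real.sign_of_pos h, abs_of_pos h]; ring

private lemma sum_restrict {K : ℕ} (I : Finset (Fin K)) (f : Fin K → ℝ)
    (hf : ∀ j ∉ I, f j = 0) : ∑ j, f j = ∑ j : ↥I, f j.val := by
  rw [Finset.sum_coe_sort I f]
  exact (Finset.sum_subset I.subset_univ (fun j _ hj => hf j hj)).symm

theorem stmt19 {d K : ℕ} (Φ : Matrix (Fin d) (Fin K) ℝ) (I : Finset (Fin K))
    (x : Fin K → ℝ) (hsupp : ∀ i, i ∉ I → x i = 0) (hnz : ∀ i ∈ I, x i ≠ 0)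
    (hrank : IsUnit (((Φᵀ * Φ).submatrix (Subtype.val : ↥I → Fin K)
      (Subtype.val : ↥I → Fin K)).det))
    (herc : ∀ k, k ∉ I →
      |∑ j : ↥I,
          (∑ i : ↥I, (Φᵀ * Φ : Matrix (Fin K) (Fin K) ℝ) k i.val *
            (((Φᵀ * Φ).submatrix (Subtype.val : ↥I → Fin K)
              (Subtype.val : ↥I → Fin K))⁻¹) i j) *
          Real.sign (x j.val)| < 1) :
    ∀ z : Fin K → ℝ, Φ.mulVec z = Φ.mulVec x → z ≠ x → ∑ i, |x i| < ∑ i, |z i| := by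
  intro z hz hzx
  set G : Matrix (Fin K) (Fin K) ℝ := Φᵀ * Φ with hG
  set A : Matrix ↥I ↥I ℝ := G.submatrix (Subtype.val : ↥I → Fin K) (Subtype.val : ↥I → Fin K) with hA
  set s : ↥I → ℝ := fun j => Real.sign (x j.val) with hs
  set u : ↥I → ℝ := A⁻¹ *ᵥ s with hu
  set v : Fin K → ℝ := fun i => if h : i ∈ I then u ⟨i, h⟩ else 0 with hv
  set w : Fin K → ℝ := G *ᵥ v with hw
  -- w k = ∑ j : ↥I, G k j * u j
  have hwsum : ∀ k : Fin K, w k = ∑ j : ↥I, G k j.val * u j := by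
    intro k
    have h1 : w k = ∑ j : Fin K, G k j * v j := by
      simp [hw, Matrix.mulVec, dotProduct]
    rw [h1, sum_restrict I (fun j => G k j * v j)
      (fun j hj => by simp [hv, hj])]
    refine Finset.sum_congr rfl fun j _ => ?_
    simp [hv, j.2]
  -- on I, w = sign x
  have hAu : A *ᵥ u = s := by
    rw [hu, Matrix.mulVec_mulVec, Matrix.mul_nonsing_inv _ hrank, Matrix.one_mulVec]
  have hwI : ∀ i (hi : i ∈ I), w i = Real.sign (x i) := by
    intro i hi
    have : w i = (A *ᵥ u) ⟨i, hi⟩ := by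
      rw [hwsum]
      simp [Matrix.mulVec, dotProduct, hA, Matrix.submatrix]
    rw [this, hAu]
  -- off I, |w| < 1
  have hwO : ∀ k, k ∉ I → |w k| < 1 := by
    intro k hk
    have h := herc k hk
    have heq : w k = ∑ j : ↥I,
        (∑ i : ↥I, G k i.val * A⁻¹ i j) * s j := by
      rw [hwsum]
      have hu' : ∀ j : ↥I, u j = ∑ i : ↥I, A⁻¹ j i * s i := by
        intro j; simp [hu, Matrix.mulVec, dotProduct]
      simp_rw [hu', Finset.mul_sum, Finset.sum_mul]
      rw [Finset.sum_comm]
      exact Finset.sum_congr rfl fun j _ => Finset.sum_congr rfl fun i _ => by ring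
    rw [heq]
    exact h
  have hwle : ∀ i, |w i| ≤ 1 := by
    intro i
    by_cases hi : i ∈ I
    · rw [hwI i hi]
      rcases lt_trichotomy (x i) 0 with h | h | h
      · rw [Real.sign_of_neg h]; norm_num
      · rw [h]; simp [Real.sign_zero]
      · rw [Real.sign_of_pos h]; norm_num
    · exact (hwO i hi).le
  -- <z, w> = <x, w>
  have hdot : ∑ i, z i * w i = ∑ i, x i * w i := by
    have key : ∀ y : Fin K → ℝ, ∑ i, y i * w i = (Φ *ᵥ y) ⬝ᵥ (Φ *ᵥ v) := by
      intro y
      have : ∑ i, y i * w i = y ⬝ᵥ w := rfl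
      rw [this, hw, hG, ← Matrix.mulVec_mulVec, Matrix.dotProduct_mulVec,
        Matrix.vecMul_transpose]
    rw [key z, key x, hz]
  -- <x, w> = ∑ |x i|
  have hxw : ∑ i, x i * w i = ∑ i, |x i| := by
    refine Finset.sum_congr rfl fun i _ => ?_
    by_cases hi : i ∈ I
    · rw [hwI i hi, mul_sign_eq_abs]
    · rw [hsupp i hi]; simp
  by_cases hcase : ∀ k ∉ I, z k = 0
  · -- then z = x, contradiction
    exfalso
    apply hzx
    have hGz : G *ᵥ (z - x) = 0 := by
      rw [hG, ← Matrix.mulVec_mulVec, Matrix.mulVec_sub, hz, sub_self, Matrix.mulVec_zero]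
    have hAd : A *ᵥ (fun j : ↥I => z j.val - x j.val) = 0 := by
      funext i
      have h1 : (A *ᵥ fun j : ↥I => z j.val - x j.val) i
          = ∑ j : ↥I, G i.val j.val * (z j.val - x j.val) := by
        simp [Matrix.mulVec, dotProduct, hA]
      have h3 : (G *ᵥ (z - x)) i.val = ∑ j : Fin K, G i.val j * (z j - x j) := by
        simp [Matrix.mulVec, dotProduct]
      simp only [Pi.zero_apply]
      rw [h1, ← sum_restrict I (fun j => G i.val j * (z j - x j))
        (fun j hj => by simp [hcase j hj, hsupp j hj]), ← h3, hGz]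
      simp
    have hd0 : (fun j : ↥I => z j.val - x j.val) = 0 := by
      have := congrArg (fun y => A⁻¹ *ᵥ y) hAd
      simpa [Matrix.mulVec_mulVec, Matrix.nonsing_inv_mul _ hrank, Matrix.one_mulVec] using this
    funext i
    by_cases hi : i ∈ I
    · have := congrFun hd0 ⟨i, hi⟩
      simpa [sub_eq_zero] using this
    · rw [hcase i hi, hsupp i hi]
  · push_neg at hcase
    obtain ⟨k, hk, hzk⟩ := hcase
    have : ∑ i, |x i| = ∑ i, z i * w i := by rw [hdot, hxw]
    rw [this]
    refine Finset.sum_lt_sum (fun i _ => ?_) ⟨k, Finset.mem_univ k, ?_⟩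
    · calc z i * w i ≤ |z i * w i| := le_abs_self _
        _ = |z i| * |w i| := abs_mul _ _
        _ ≤ |z i| * 1 := mul_le_mul_of_nonneg_left (hwle i) (abs_nonneg _)
        _ = |z i| := mul_one _
    · calc z k * w k ≤ |z k| * |w k| := le_trans (le_abs_self _) (le_of_eq (abs_mul _ _))
        _ < |z k| * 1 := mul_lt_mul_of_pos_left (hwO k hk) (abs_pos.mpr hzk)
        _ = |z k| := mul_one _
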